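/- If n, m, a are nonnegative integers with n > m, n ≥ 2, and L_n + L_m = 3^a, then 0 < a·(log 3 / log α) − n < 7/α^{n−m}. -/

import Mathlib

/-- The Lucas sequence: `L 0 = 2`, `L 1 = 1`, `L (n+2) = L (n+1) + L n`. -/
def lucas : ℕ → ℕ
  | 0 => 2
  | 1 => 1
  | n + 2 => lucas (n + 1) + lucas n

/-- The golden ratio `α = (1 + √5)/2`. -/
noncomputable def α : ℝ := (1 + Real.sqrt 5) / 2

noncomputable def β : ℝ := (1 - Real.sqrt 5) / 2

lemma s5sq : Real.sqrt 5 ^ 2 = 5 := Real.sq_sqrt (by norm_num)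

lemma hα2 : α ^ 2 = α + 1 := by
  have := s5sq; unfold α; nlinarith

lemma hβ2 : β ^ 2 = β + 1 := by
  have := s5sq; unfold β; nlinarith

lemma lucas_real (k : ℕ) : (lucas k : ℝ) = α ^ k + β ^ k := by
  induction k using Nat.twoStepInduction with
  | zero => show ((2:ℕ):ℝ) = _; push_cast; simp [α, β]; norm_num
  | one => show ((1:ℕ):ℝ) = _; push_cast; simp [α, β]
  | more j ih1 ih2 =>
      show ((lucas (j+1) + lucas j : ℕ) : ℝ) = _
      push_cast
      rw [ih1, ih2]
      linear_combination (-(α ^ j)) * hα2 + (-(β ^ j)) * hβ2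

lemma lucas_pos (k : ℕ) : 1 ≤ lucas k := by
  induction k using Nat.twoStepInduction with
  | zero => simp [lucas]
  | one => simp [lucas]
  | more j ih1 ih2 => show 1 ≤ lucas (j+1) + lucas j; omega

lemma s5_lb : 2.2 < Real.sqrt 5 := by nlinarith [s5sq, Real.sqrt_nonneg 5]
lemma s5_ub : Real.sqrt 5 < 3 := by nlinarith [s5sq, Real.sqrt_nonneg 5]

lemma α_lb : 1.6 < α := by unfold α; nlinarith [s5_lb]
lemma α_ub : α < 2 := by unfold α; nlinarith [s5_ub]
lemma α_gt1 : 1 < α := by nlinarith [α_lb]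
lemma α_pos : 0 < α := by linarith [α_gt1]

lemma β_abs : |β| < 1 := by
  rw [abs_lt]; unfold β; constructor <;> nlinarith [s5_lb, s5_ub]

lemma logα_pos : 0 < Real.log α := Real.log_pos α_gt1

lemma logα_gt : 3 / 7 < Real.log α := by
  have he : Real.exp 1 < 2.7182818286 := Real.exp_one_lt_d9
  have h1 : Real.exp 3 = Real.exp 1 ^ 3 := by
    rw [← Real.exp_nat_mul]; norm_num
  have h2 : Real.exp 1 ^ 3 < 2.7182818286 ^ 3 :=
    pow_lt_pow_left₀ he (Real.exp_pos 1).le (by norm_num)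
  have h3 : (1.6 : ℝ) ^ 7 < α ^ 7 := pow_lt_pow_left₀ α_lb (by norm_num) (by norm_num)
  have h4 : Real.exp 3 < α ^ 7 := by nlinarith
  have h5 : (3 : ℝ) < Real.log (α ^ 7) :=
    (Real.lt_log_iff_exp_lt (pow_pos α_pos 7)).mpr h4
  rw [Real.log_pow] at h5
  push_cast at h5
  linarith

/-- If `n > m`, `n ≥ 2` and `L n + L m = 3^a`, then
`0 < a·(log 3 / log α) − n < 7/α^(n−m)`. -/
theorem homogeneous_form_bounds (n m a : ℕ) (hnm : m < n) (hn : 2 ≤ n)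
    (h : lucas n + lucas m = 3 ^ a) :
    0 < (a : ℝ) * (Real.log 3 / Real.log α) - (n : ℝ) ∧
    (a : ℝ) * (Real.log 3 / Real.log α) - (n : ℝ) < 7 / α ^ (n - m) := by
  have hN : ((lucas n : ℝ) + lucas m) = 3 ^ a := by exact_mod_cast h
  have hLn := lucas_real n
  have hLm := lucas_real m
  have hβn : |β ^ n| < 1 := by
    rw [abs_pow]; exact pow_lt_one₀ (abs_nonneg β) β_abs (by omega)
  have hβnle : -1 < β ^ n := by
    have := abs_lt.mp hβn; linarith [this.1]
  have hβmle : |β ^ m| ≤ 1 := by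
    rw [abs_pow]; exact pow_le_one₀ (abs_nonneg β) β_abs.le
  have hβnle' : β ^ n ≤ 1 := by have := abs_lt.mp hβn; linarith [this.2]
  have hβm1 : β ^ m ≤ 1 := (abs_le.mp hβmle).2
  have hLm1 : (1 : ℝ) ≤ (lucas m : ℝ) := by exact_mod_cast lucas_pos m
  have hαn_pos : (0:ℝ) < α ^ n := pow_pos α_pos n
  have hαd_pos : (0:ℝ) < α ^ (n - m) := pow_pos α_pos (n - m)
  -- lower bound: α^n < 3^a
  have hlow : α ^ n < 3 ^ a := by nlinarith
  -- upper bound: 3^a ≤ α^n * (1 + 3/α^(n-m))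
  have e1 : α ^ m * α ^ (n - m) = α ^ n := by
    rw [← pow_add]; congr 1; omega
  have e2 : α ^ (n - m) ≤ α ^ n := pow_le_pow_right₀ α_gt1.le (Nat.sub_le n m)
  have hup : (3:ℝ) ^ a ≤ α ^ n * (1 + 3 / α ^ (n - m)) := by
    have hαm : α ^ m = α ^ n / α ^ (n - m) := by
      field_simp [e1]
      exact e1
    have h2' : (2:ℝ) ≤ 2 * (α ^ n / α ^ (n - m)) := by
      have := (one_le_div hαd_pos).mpr e2
      linarith
    have : (3:ℝ) ^ a ≤ α ^ n + α ^ m + 2 := by nlinarith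
    rw [hαm] at this
    have expand : α ^ n * (1 + 3 / α ^ (n - m))
        = α ^ n + α ^ n / α ^ (n - m) + 2 * (α ^ n / α ^ (n - m)) := by ring
    linarith
  -- log bounds
  have h3apos : (0:ℝ) < 3 ^ a := by positivity
  have hloglow : (n:ℝ) * Real.log α < (a:ℝ) * Real.log 3 := by
    have := Real.log_lt_log hαn_pos hlow
    rwa [Real.log_pow, Real.log_pow] at this
  have hlogup : (a:ℝ) * Real.log 3 ≤ (n:ℝ) * Real.log α + 3 / α ^ (n - m) := by
    have hx : (0:ℝ) < 1 + 3 / α ^ (n - m) := by positivity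
    have l1 : Real.log (3 ^ a : ℝ) ≤ Real.log (α ^ n * (1 + 3 / α ^ (n - m))) :=
      Real.log_le_log h3apos hup
    rw [Real.log_mul (ne_of_gt hαn_pos) (ne_of_gt hx), Real.log_pow, Real.log_pow] at l1
    have l2 : Real.log (1 + 3 / α ^ (n - m)) ≤ 3 / α ^ (n - m) := by
      have := Real.log_le_sub_one_of_pos hx; linarith
    push_cast at l1
    linarith
  constructor
  · have : (n:ℝ) < (a:ℝ) * Real.log 3 / Real.log α :=
      (lt_div_iff₀ logα_pos).mpr hloglow
    rw [mul_div_assoc] at this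
    linarith
  · have h37 : 3 / α ^ (n - m) < (7 / α ^ (n - m)) * Real.log α := by
      have h3' : (3:ℝ) < 7 * Real.log α := by linarith [logα_gt]
      have := (div_lt_div_iff_of_pos_right hαd_pos).mpr h3'
      calc 3 / α ^ (n - m) < (7 * Real.log α) / α ^ (n - m) := this
        _ = (7 / α ^ (n - m)) * Real.log α := by ring
    have hfin : (a:ℝ) * Real.log 3 < ((n:ℝ) + 7 / α ^ (n - m)) * Real.log α := by
      have : ((n:ℝ) + 7 / α ^ (n - m)) * Real.log α
          = (n:ℝ) * Real.log α + (7 / α ^ (n - m)) * Real.log α := by ring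
      linarith [hlogup, h37, this.ge]
    have hfin2 : (a:ℝ) * Real.log 3 / Real.log α < (n:ℝ) + 7 / α ^ (n - m) :=
      (div_lt_iff₀ logα_pos).mpr hfin
    rw [mul_div_assoc] at hfin2
    linarith
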